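/- Let 𝒴 ⊆ ℂⁿ be a p-dimensional subspace with Ritz values η₁ ≥ ⋯ ≥ η_p of A in 𝒴, and let f : ℝ → ℝ. If η_p > λ_{p+1} and f(λⱼ) ≠ 0 for every j ∈ {1, …, p}, then for every basis matrix Y ∈ ℂ^{n×p} of 𝒴 the matrix f(A)Y has rank p; in particular the subspace 𝒴' = f(A)𝒴 has dimension p. -/

import Mathlib

/-- The Rayleigh quotient `ρ(v) = (vᴴAv)/(vᴴv)` of the Hermitian matrix `A`. -/
noncomputable def rayleigh {n : ℕ} (A : Matrix (Fin n) (Fin n) ℂ)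
    (v : EuclideanSpace ℂ (Fin n)) : ℝ :=
  ((inner ℂ v (Matrix.toEuclideanLin A v) : ℂ)).re / ‖v‖ ^ 2

/-- The `i`-th largest Ritz value (1-indexed, `i ∈ {1, …, dim S}`) of the Hermitian
matrix `A` in the subspace `S`, characterized via the Courant–Fischer max-min
principle applied inside `S` (equivalently, the `i`-th largest eigenvalue of
`SᴴAS` for any orthonormal basis matrix `S`). -/
noncomputable def ritzValue {n : ℕ} (A : Matrix (Fin n) (Fin n) ℂ)
    (S : Submodule ℂ (EuclideanSpace ℂ (Fin n))) (i : ℕ) : ℝ :=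
  sSup {r : ℝ | ∃ T : Submodule ℂ (EuclideanSpace ℂ (Fin n)), T ≤ S ∧
    Module.finrank ℂ T = i ∧ ∀ v ∈ T, v ≠ 0 → r ≤ rayleigh A v}

/-- `f(A) = ∑ j, f(λ_j) x_j x_jᴴ` as a linear operator, for eigenvalues `lam`
and orthonormal eigenvectors `x` of `A`. -/
noncomputable def matFun {n : ℕ} (lam : Fin n → ℝ)
    (x : Fin n → EuclideanSpace ℂ (Fin n)) (f : ℝ → ℝ) :
    EuclideanSpace ℂ (Fin n) →ₗ[ℂ] EuclideanSpace ℂ (Fin n) :=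
  ∑ j : Fin n, (f (lam j) : ℂ) • ((innerSL ℂ (x j)).toLinearMap.smulRight (x j))

/-- `y` is a Ritz vector of `A` in `S` associated with the Ritz value `η`:
`y ∈ S`, `y ≠ 0`, `ρ(y) = η` and `Ay − ηy ⊥ S`. -/
def IsRitzVector {n : ℕ} (A : Matrix (Fin n) (Fin n) ℂ)
    (S : Submodule ℂ (EuclideanSpace ℂ (Fin n))) (η : ℝ)
    (y : EuclideanSpace ℂ (Fin n)) : Prop :=
  y ∈ S ∧ y ≠ 0 ∧ rayleigh A y = η ∧
    ∀ v ∈ S, (inner ℂ v (Matrix.toEuclideanLin A y - (η : ℂ) • y) : ℂ) = 0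

section aux
variable {n : ℕ}

lemma matFun_apply (lam : Fin n → ℝ) (x : Fin n → EuclideanSpace ℂ (Fin n)) (f : ℝ → ℝ)
    (v : EuclideanSpace ℂ (Fin n)) :
    matFun lam x f v = ∑ j : Fin n, ((f (lam j) : ℂ) * inner ℂ (x j) v) • x j := by
  simp [matFun, LinearMap.sum_apply, mul_smul]

-- rayleigh lower bound by operator norm
lemma rayleigh_lower (A : Matrix (Fin n) (Fin n) ℂ) (w : EuclideanSpace ℂ (Fin n)) (hw : w ≠ 0) :
    -(‖LinearMap.toContinuousLinearMap (Matrix.toEuclideanLin A)‖) ≤ rayleigh A w := by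
  set g := LinearMap.toContinuousLinearMap (Matrix.toEuclideanLin A)
  have hwn : ‖w‖ ≠ 0 := norm_ne_zero_iff.mpr hw
  have hw2 : (0:ℝ) < ‖w‖ ^ 2 := by positivity
  rw [rayleigh, le_div_iff₀ hw2]
  have h1 : |(inner ℂ w (Matrix.toEuclideanLin A w) : ℂ).re| ≤ ‖g‖ * ‖w‖ ^ 2 := by
    calc |(inner ℂ w (Matrix.toEuclideanLin A w) : ℂ).re| ≤ ‖(inner ℂ w (Matrix.toEuclideanLin A w) : ℂ)‖ :=
          Complex.abs_re_le_norm _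
      _ ≤ ‖w‖ * ‖Matrix.toEuclideanLin A w‖ := norm_inner_le_norm _ _
      _ = ‖w‖ * ‖g w‖ := rfl
      _ ≤ ‖w‖ * (‖g‖ * ‖w‖) := by
          gcongr ‖w‖ * ?_; exact g.le_opNorm w
      _ = ‖g‖ * ‖w‖ ^ 2 := by ring
  nlinarith [abs_le.mp h1, norm_nonneg g]

end aux

section main
variable {n p : ℕ}

theorem ritz_le (A : Matrix (Fin n) (Fin n) ℂ)
    (Y : Submodule ℂ (EuclideanSpace ℂ (Fin n))) (hY : Module.finrank ℂ Y = p)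
    (v : EuclideanSpace ℂ (Fin n)) (hvY : v ∈ Y) (hv0 : v ≠ 0) (c : ℝ)
    (hc : rayleigh A v ≤ c) : ritzValue A Y p ≤ c := by
  apply csSup_le
  · refine ⟨-(‖LinearMap.toContinuousLinearMap (Matrix.toEuclideanLin A)‖), Y, le_rfl, hY,
      fun w _ hw => rayleigh_lower A w hw⟩
  · rintro r ⟨T, hTY, hTrank, hT⟩
    have hTY' : T = Y := by
      have : FiniteDimensional ℂ Y := FiniteDimensional.finiteDimensional_submodule Y
      exact Submodule.eq_of_le_of_finrank_le hTY (by rw [hTrank, hY])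
    exact le_trans (hT v (hTY' ▸ hvY) hv0) hc

end main

theorem rayleigh_le_of_perp {n p : ℕ} (hpn : p < n)
    (A : Matrix (Fin n) (Fin n) ℂ) (hA : A.IsHermitian)
    (lam : Fin n → ℝ) (hlam : Antitone lam)
    (x : Fin n → EuclideanSpace ℂ (Fin n)) (hx : Orthonormal ℂ x)
    (heig : ∀ j, Matrix.toEuclideanLin A (x j) = (lam j : ℂ) • x j)
    (v : EuclideanSpace ℂ (Fin n)) (hv0 : v ≠ 0)
    (hperp : ∀ j : Fin n, (j : ℕ) < p → (inner ℂ (x j) v : ℂ) = 0) :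
    rayleigh A v ≤ lam ⟨p, hpn⟩ := by
  have : Nonempty (Fin n) := ⟨⟨p, hpn⟩⟩
  have hcard : Fintype.card (Fin n) = Module.finrank ℂ (EuclideanSpace ℂ (Fin n)) := by simp
  set b0 : Module.Basis (Fin n) ℂ (EuclideanSpace ℂ (Fin n)) :=
    basisOfOrthonormalOfCardEqFinrank hx hcard with hb0
  have hb0coe : ⇑b0 = x := coe_basisOfOrthonormalOfCardEqFinrank hx hcard
  set b : OrthonormalBasis (Fin n) ℂ (EuclideanSpace ℂ (Fin n)) :=
    b0.toOrthonormalBasis (by rw [hb0coe]; exact hx) with hb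
  have hbcoe : ⇑b = x := by rw [hb, Module.Basis.coe_toOrthonormalBasis, hb0coe]
  set c : Fin n → ℂ := fun j => (inner ℂ (x j) v : ℂ) with hc
  have hrepr : ∀ j, b.repr v j = c j := fun j => by
    rw [b.repr_apply_apply, hbcoe]
  have hsym : (Matrix.toEuclideanLin A).IsSymmetric :=
    Matrix.isHermitian_iff_isSymmetric.mp hA
  have hreprA : ∀ j, b.repr (Matrix.toEuclideanLin A v) j = (lam j : ℂ) * c j := by
    intro j
    rw [b.repr_apply_apply, hbcoe, ← hsym (x j) v, heig j, inner_smul_left]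
    simp [hc, Complex.conj_ofReal]
  have hinner : (inner ℂ v (Matrix.toEuclideanLin A v) : ℂ).re
      = ∑ j : Fin n, lam j * ‖c j‖ ^ 2 := by
    rw [← b.repr.inner_map_map v (Matrix.toEuclideanLin A v)]
    rw [PiLp.inner_apply]
    rw [Complex.re_sum]
    congr 1; ext j
    rw [hrepr, hreprA, RCLike.inner_apply]
    have : (starRingEnd ℂ) (c j) * ((lam j : ℂ) * c j)
        = (lam j : ℂ) * ((‖c j‖ : ℂ) ^ 2) := by
      rw [mul_comm ((starRingEnd ℂ) (c j)), mul_assoc, Complex.mul_conj']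
    rw [mul_comm _ ((starRingEnd ℂ) (c j)), this]
    norm_cast
  have hnorm : ‖v‖ ^ 2 = ∑ j : Fin n, ‖c j‖ ^ 2 := by
    rw [← b.repr.norm_map v, EuclideanSpace.norm_eq, Real.sq_sqrt (by positivity)]
    congr 1; ext j; rw [hrepr]
  have hw2 : (0:ℝ) < ‖v‖ ^ 2 := by
    have := norm_ne_zero_iff.mpr hv0; positivity
  rw [rayleigh, div_le_iff₀ hw2, hinner, hnorm, Finset.mul_sum]
  apply Finset.sum_le_sum
  intro j _
  by_cases hj : (j : ℕ) < p
  · rw [show c j = 0 from hperp j hj]; simp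
  · have : lam j ≤ lam ⟨p, hpn⟩ := hlam (by
      simp [Fin.le_def]; omega)
    nlinarith [sq_nonneg ‖c j‖]

/-- If the smallest Ritz value `η_p` of `A` in the `p`-dimensional
subspace `𝒴` satisfies `η_p > λ_{p+1}` and `f(λ_j) ≠ 0` for `j ∈ {1,…,p}`, then for
every basis matrix `Y` of `𝒴` the matrix `f(A)Y` has rank `p`; in particular
`𝒴' = f(A)𝒴` has dimension `p`.  (Eigenvalues are 0-indexed: `lam ⟨j⟩` is `λ_{j+1}`.) -/
theorem stmt0 {n p : ℕ} (hp : 0 < p) (hpn : p < n)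
    (A : Matrix (Fin n) (Fin n) ℂ) (hA : A.IsHermitian)
    (lam : Fin n → ℝ) (hlam : Antitone lam)
    (x : Fin n → EuclideanSpace ℂ (Fin n)) (hx : Orthonormal ℂ x)
    (heig : ∀ j, Matrix.toEuclideanLin A (x j) = (lam j : ℂ) • x j)
    (Y : Submodule ℂ (EuclideanSpace ℂ (Fin n))) (hY : Module.finrank ℂ Y = p)
    (f : ℝ → ℝ)
    (hηp : lam ⟨p, hpn⟩ < ritzValue A Y p)
    (hf : ∀ j : Fin n, (j : ℕ) < p → f (lam j) ≠ 0) :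
    (∀ B : Fin p → EuclideanSpace ℂ (Fin n), LinearIndependent ℂ B →
      (∀ i, B i ∈ Y) → LinearIndependent ℂ (fun i => matFun lam x f (B i))) ∧
    Module.finrank ℂ (Y.map (matFun lam x f)) = p := by
  have hker : ∀ v ∈ Y, matFun lam x f v = 0 → v = 0 := by
    intro v hvY hv
    by_contra hv0
    have hperp : ∀ j : Fin n, (j : ℕ) < p → (inner ℂ (x j) v : ℂ) = 0 := by
      intro j hj
      have h1 : (inner ℂ (x j) (matFun lam x f v) : ℂ) = 0 := by rw [hv, inner_zero_right]
      rw [matFun_apply, hx.inner_right_fintype] at h1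
      exact (mul_eq_zero.mp h1).resolve_left (by
        simpa using hf j hj)
    have h2 : rayleigh A v ≤ lam ⟨p, hpn⟩ :=
      rayleigh_le_of_perp hpn A hA lam hlam x hx heig v hv0 hperp
    exact absurd (ritz_le A Y hY v hvY hv0 _ h2) (not_le.mpr hηp)
  have hdisj : Disjoint Y (LinearMap.ker (matFun lam x f)) := by
    rw [Submodule.disjoint_def]
    exact fun v hvY hvk => hker v hvY (LinearMap.mem_ker.mp hvk)
  constructor
  · intro B hB hBY
    exact hB.map (hdisj.mono_left (Submodule.span_le.mpr (Set.range_subset_iff.mpr hBY)))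
  · have h3 := LinearMap.finrank_range_add_finrank_ker ((matFun lam x f).domRestrict Y)
    rw [LinearMap.range_domRestrict] at h3
    have hker' : LinearMap.ker ((matFun lam x f).domRestrict Y) = ⊥ := by
      rw [LinearMap.ker_eq_bot']
      rintro ⟨v, hv⟩ hv0
      exact Subtype.ext (hker v hv (by simpa using hv0))
    rw [hker'] at h3
    clear hker'
    simp only [finrank_bot, add_zero] at h3
    rw [h3, hY]
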